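/- arXiv:1905.07342 — 5 statements merged into one kernel-verified Lean document; each statement's English description precedes it below -/
import Mathlib

section
/- For all p₁, p₂ in (0,1), the Kullback-Leibler divergence between Bernoulli distributions satisfies kl(p₁,p₂) ≤ (p₁-p₂)²/min(p₁(1-p₁), p₂(1-p₂)). -/
/-- Bernoulli Kullback-Leibler divergence. -/
noncomputable def klBern (p q : ℝ) : ℝ :=
  p * Real.log (p / q) + (1 - p) * Real.log ((1 - p) / (1 - q))

theorem kl_le_sq_div_min (p₁ p₂ : ℝ) (h₁ : p₁ ∈ Set.Ioo (0:ℝ) 1)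
    (h₂ : p₂ ∈ Set.Ioo (0:ℝ) 1) :
    klBern p₁ p₂ ≤ (p₁ - p₂) ^ 2 / min (p₁ * (1 - p₁)) (p₂ * (1 - p₂)) := by
  obtain ⟨hp0, hp1⟩ := h₁
  obtain ⟨hq0, hq1⟩ := h₂
  have hq1' : (0:ℝ) < 1 - p₂ := by linarith
  have hp1' : (0:ℝ) < 1 - p₁ := by linarith
  have hmin : (0:ℝ) < min (p₁ * (1 - p₁)) (p₂ * (1 - p₂)) := by
    apply lt_min <;> positivity
  have h1 : Real.log (p₁ / p₂) ≤ p₁ / p₂ - 1 :=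
    Real.log_le_sub_one_of_pos (by positivity)
  have h2 : Real.log ((1 - p₁) / (1 - p₂)) ≤ (1 - p₁) / (1 - p₂) - 1 :=
    Real.log_le_sub_one_of_pos (by positivity)
  have key : klBern p₁ p₂ ≤ (p₁ - p₂) ^ 2 / (p₂ * (1 - p₂)) := by
    have : klBern p₁ p₂ ≤ p₁ * (p₁ / p₂ - 1) + (1 - p₁) * ((1 - p₁) / (1 - p₂) - 1) := by
      unfold klBern
      gcongr
    refine this.trans (le_of_eq ?_)
    field_simp
    ring
  refine key.trans ?_
  gcongr
  exact min_le_right _ _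
end

section
/- For any real p ∈ (0,1) and any real α with 5 ≤ α ≤ 1/p, one has kl(αp, p) ≥ (αp/2)·log α, where kl is the Bernoulli Kullback-Leibler divergence. -/
lemma aux_log_five : (1.6:ℝ) ≤ Real.log 5 := by
  rw [show (1.6:ℝ) = 8/5 by norm_num, Real.le_log_iff_exp_le (by norm_num)]
  have h := Real.exp_one_lt_d9
  have h8 : Real.exp (8/5) ^ 5 = Real.exp 1 ^ 8 := by
    rw [← Real.exp_nat_mul, ← Real.exp_nat_mul]; norm_num
  have hpow : Real.exp (8/5) ^ 5 ≤ 5 ^ 5 := by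
    rw [h8]
    calc Real.exp 1 ^ 8 ≤ (2.7182818286:ℝ) ^ 8 :=
          pow_le_pow_left₀ (Real.exp_pos 1).le h.le 8
      _ ≤ 5 ^ 5 := by norm_num
  exact le_of_pow_le_pow_left₀ (by norm_num) (by norm_num) hpow

lemma aux_log_lb {α : ℝ} (hα : 5 ≤ α) : 2 - 2/α ≤ Real.log α := by
  have hα0 : (0:ℝ) < α := by linarith
  have h1 : Real.log (5/α) ≤ 5/α - 1 := Real.log_le_sub_one_of_pos (by positivity)
  have h2 : Real.log (5/α) = Real.log 5 - Real.log α :=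
    Real.log_div (by norm_num) (ne_of_gt hα0)
  have h3 : (1.6:ℝ) ≤ Real.log 5 := aux_log_five
  have h6 : 3/α ≤ 3/5 := by
    rw [div_le_div_iff₀ hα0 (by norm_num)]; linarith
  have h7 : 5/α = 2/α + 3/α := by ring
  linarith

theorem kl_alpha_p (p α : ℝ) (hp : p ∈ Set.Ioo (0:ℝ) 1) (hα : 5 ≤ α)
    (hαp : α ≤ 1 / p) :
    α * p / 2 * Real.log α ≤ klBern (α * p) p := by
  obtain ⟨hp0, hp1⟩ := hp
  have hα0 : (0:ℝ) < α := by linarith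
  set c := α * p with hc
  have hc0 : 0 < c := by positivity
  have hc1 : c ≤ 1 := by
    have := mul_le_mul_of_nonneg_right hαp hp0.le
    rwa [one_div, inv_mul_cancel₀ hp0.ne'] at this
  have hcp : c / p = α := by
    rw [hc, mul_div_assoc, div_self hp0.ne', mul_one]
  have hlogα : 2 - 2/α ≤ Real.log α := aux_log_lb hα
  have hS : p - c ≤ (1 - c) * Real.log ((1 - c)/(1 - p)) := by
    rcases eq_or_lt_of_le hc1 with h1 | h1
    · rw [← h1]; simp; linarith
    · have h1c : (0:ℝ) < 1 - c := by linarith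
      have h1p : (0:ℝ) < 1 - p := by linarith
      have hx : Real.log ((1-p)/(1-c)) ≤ (1-p)/(1-c) - 1 :=
        Real.log_le_sub_one_of_pos (by positivity)
      have hlog : Real.log ((1-c)/(1-p)) = - Real.log ((1-p)/(1-c)) := by
        rw [← Real.log_inv]; congr 1; field_simp
      rw [hlog]
      have hmul : (1-c) * (1 - (1-p)/(1-c)) ≤ (1-c) * -Real.log ((1-p)/(1-c)) := by
        apply mul_le_mul_of_nonneg_left _ h1c.le; linarith
      have heq : (1-c) * (1 - (1-p)/(1-c)) = p - c := by
        field_simp; ring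
      linarith
  have hkl : klBern c p = c * Real.log α + (1 - c) * Real.log ((1-c)/(1-p)) := by
    rw [klBern, hcp]
  rw [hkl]
  have key : c - p ≤ c/2 * Real.log α := by
    have hmono : c/2 * (2 - 2/α) ≤ c/2 * Real.log α :=
      mul_le_mul_of_nonneg_left hlogα (by positivity)
    have heq : c/2 * (2 - 2/α) = c - p := by
      rw [hc]; field_simp
    linarith
  linarith
end

section
/- Let n be an even positive integer, and consider a graph on n nodes where each node a has a degree count N_a ≥ 0 (number of pairs involving a that were sampled), with total ∑_a N_a = 2T for some T ≥ 1. Suppose moreover that N_a ≤ B for all a, where B > 0. Then for any positive real M, ∑_{a=1}^n min(N_a, M) ≥ min( max(M·√T, M·T/B), T/2 ). -/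
theorem sum_min_degree_lower_bound (n T : ℕ) (hn : 0 < n) (hneven : Even n)
    (P : Finset (Finset (Fin n))) (hP : ∀ e ∈ P, e.card = 2)
    (hT : P.card = T) (hT1 : 1 ≤ T)
    (N : Fin n → ℕ) (hN : ∀ a, N a = (P.filter (fun e => a ∈ e)).card)
    (B M : ℝ) (hB : 0 < B) (hM : 0 < M)
    (hNB : ∀ a, (N a : ℝ) ≤ B)
    (hsum : ∑ a, N a = 2 * T) :
    min (max (M * Real.sqrt T) (M * T / B)) ((T : ℝ) / 2) ≤
      ∑ a, min (N a : ℝ) M := by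
  classical
  set L : Finset (Fin n) := Finset.univ.filter (fun a => M < (N a : ℝ)) with hL
  set k : ℕ := L.card with hk
  -- sum is at least k * M
  have hmin_nonneg : ∀ a : Fin n, 0 ≤ min (N a : ℝ) M := fun a =>
    le_min (Nat.cast_nonneg _) hM.le
  have hkM : (k : ℝ) * M ≤ ∑ a, min (N a : ℝ) M := by
    have h1 : ∑ a ∈ L, min (N a : ℝ) M ≤ ∑ a, min (N a : ℝ) M :=
      Finset.sum_le_sum_of_subset_of_nonneg (Finset.subset_univ _)
        (fun a _ _ => hmin_nonneg a)
    have h2 : ∑ a ∈ L, min (N a : ℝ) M = (k : ℝ) * M := by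
      rw [Finset.sum_congr rfl (fun a ha => ?_), Finset.sum_const, nsmul_eq_mul]
      have : M < (N a : ℝ) := (Finset.mem_filter.mp ha).2
      exact min_eq_right this.le
    linarith
  -- sum over L of N
  have hLsum_small : 2 * (T : ℝ) - ∑ a ∈ L, (N a : ℝ) ≤ ∑ a, min (N a : ℝ) M := by
    have hsplit : ∑ a ∈ L, (N a : ℝ) + ∑ a ∈ Lᶜ, (N a : ℝ) = 2 * (T : ℝ) := by
      rw [Finset.sum_add_sum_compl]
      exact_mod_cast congrArg (Nat.cast : ℕ → ℝ) hsum
    have h1 : ∑ a ∈ Lᶜ, (N a : ℝ) ≤ ∑ a ∈ Lᶜ, min (N a : ℝ) M := by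
      apply Finset.sum_le_sum
      intro a ha
      have : ¬ M < (N a : ℝ) := by
        simpa [hL] using (Finset.mem_compl.mp ha)
      exact le_of_eq (min_eq_left (not_lt.mp this)).symm
    have h2 : ∑ a ∈ Lᶜ, min (N a : ℝ) M ≤ ∑ a, min (N a : ℝ) M :=
      Finset.sum_le_sum_of_subset_of_nonneg (Finset.subset_univ _)
        (fun a _ _ => hmin_nonneg a)
    linarith
  -- bound sum over L by k * B
  have hLB : ∑ a ∈ L, (N a : ℝ) ≤ (k : ℝ) * B := by
    calc ∑ a ∈ L, (N a : ℝ) ≤ ∑ _a ∈ L, B := Finset.sum_le_sum (fun a _ => hNB a)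
    _ = (k : ℝ) * B := by rw [Finset.sum_const, nsmul_eq_mul]
  -- double counting bound: 2 * ∑_L N ≤ 2 T + k * k  (in ℕ)
  have hLT : 2 * ∑ a ∈ L, N a ≤ 2 * T + k * k := by
    have hswap : ∑ a ∈ L, N a = ∑ e ∈ P, (L.filter (fun a => a ∈ e)).card := by
      simp only [hN, Finset.card_filter]
      rw [Finset.sum_comm]
    have hper : ∀ e ∈ P, (L.filter (fun a => a ∈ e)).card ≤
        1 + (if e ⊆ L then 1 else 0) := by
      intro e he
      by_cases hsub : e ⊆ L
      · have h1 : (L.filter (fun a => a ∈ e)).card ≤ e.card :=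
          Finset.card_le_card (fun a ha => (Finset.mem_filter.mp ha).2)
        have h2 := hP e he
        rw [if_pos hsub]
        omega
      · obtain ⟨x, hxe, hxL⟩ := Finset.not_subset.mp hsub
        have hsub2 : L.filter (fun a => a ∈ e) ⊆ e.erase x := by
          intro a ha
          rcases Finset.mem_filter.mp ha with ⟨haL, hae⟩
          exact Finset.mem_erase.mpr ⟨fun h => hxL (h ▸ haL), hae⟩
        have := Finset.card_le_card hsub2
        have hce : (e.erase x).card = 1 := by
          rw [Finset.card_erase_of_mem hxe, hP e he]
        rw [if_neg hsub]
        omega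
    have hsum2 : ∑ e ∈ P, (L.filter (fun a => a ∈ e)).card ≤
        T + (P.filter (fun e => e ⊆ L)).card := by
      calc ∑ e ∈ P, (L.filter (fun a => a ∈ e)).card
          ≤ ∑ e ∈ P, (1 + if e ⊆ L then 1 else 0) := Finset.sum_le_sum hper
        _ = P.card + (P.filter (fun e => e ⊆ L)).card := by
            rw [Finset.sum_add_distrib, Finset.sum_const, smul_eq_mul, mul_one,
              Finset.sum_boole]
            simp
        _ = T + _ := by rw [hT]
    have hC : (P.filter (fun e => e ⊆ L)).card ≤ k.choose 2 := by
      have : P.filter (fun e => e ⊆ L) ⊆ L.powersetCard 2 := by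
        intro e he
        rcases Finset.mem_filter.mp he with ⟨heP, heL⟩
        exact Finset.mem_powersetCard.mpr ⟨heL, hP e heP⟩
      calc (P.filter (fun e => e ⊆ L)).card ≤ (L.powersetCard 2).card :=
            Finset.card_le_card this
        _ = k.choose 2 := by rw [Finset.card_powersetCard]
    have hch : 2 * k.choose 2 ≤ k * k := by
      rw [Nat.choose_two_right]
      have := Nat.div_mul_le_self (k * (k - 1)) 2
      calc 2 * (k * (k-1) / 2) = k * (k-1) / 2 * 2 := by ring
        _ ≤ k * (k - 1) := Nat.div_mul_le_self _ _
        _ ≤ k * k := Nat.mul_le_mul_left k (Nat.sub_le _ _)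
    omega
  have hLT' : 2 * ∑ a ∈ L, (N a : ℝ) ≤ 2 * (T : ℝ) + (k : ℝ) * k := by
    exact_mod_cast hLT
  -- case analysis
  rcases le_or_gt (T : ℝ) ((k : ℝ) * k) with hk2 | hk2
  · rcases le_or_gt (T : ℝ) ((k : ℝ) * B) with hkB | hkB
    · -- both large: k M dominates the max
      refine le_trans (min_le_left _ _) (le_trans (max_le ?_ ?_) hkM)
      · have hsq : Real.sqrt T ≤ (k : ℝ) := by
          have := Real.sqrt_le_sqrt hk2
          rwa [Real.sqrt_mul_self (Nat.cast_nonneg k)] at this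
        nlinarith
      · rw [div_le_iff₀ hB]
        nlinarith
    · -- kB < T
      refine le_trans (min_le_right _ _) (le_trans ?_ hLsum_small)
      linarith
  · -- k^2 < T
    refine le_trans (min_le_right _ _) (le_trans ?_ hLsum_small)
    linarith
end

section
/- Let S₁ ∪ S₂ be a partition of nodes where S₂ = {a : N_a > M}. If ∑_{a∈S₂} N_a ≥ 3T/2 and each pair is counted in at most two nodes of S₂ and each node is in at most min(B,|S₂|) pairs with both endpoints in S₂, then |S₂| ≥ max(√T, T/B). -/
theorem large_degree_set_is_big (n T : ℕ)
    (P : Finset (Finset (Fin n))) (hP : ∀ e ∈ P, e.card = 2)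
    (hT : P.card = T)
    (N : Fin n → ℕ) (hN : ∀ a, N a = (P.filter (fun e => a ∈ e)).card)
    (B M : ℝ) (hB : 0 < B) (hNB : ∀ a, (N a : ℝ) ≤ B)
    (hsum : ∑ a, N a = 2 * T)
    (S₂ : Finset (Fin n)) (hS₂ : S₂ = Finset.univ.filter fun a => M < (N a : ℝ))
    (hbig : (3 * T / 2 : ℝ) ≤ ∑ a ∈ S₂, (N a : ℝ)) :
    max (Real.sqrt T) ((T : ℝ) / B) ≤ (S₂.card : ℝ) := by
  set s := S₂.card with hs
  -- Step 1: 3T ≤ 2 * ∑_{a∈S₂} N a  (in ℕ)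
  have h3T : (3 * T : ℕ) ≤ 2 * ∑ a ∈ S₂, N a := by
    have : (3 * T : ℝ) ≤ 2 * ∑ a ∈ S₂, (N a : ℝ) := by linarith
    push_cast at this
    exact_mod_cast this
  -- Step 2: double counting
  have hdc : ∑ a ∈ S₂, N a = ∑ e ∈ P, (S₂.filter (fun a => a ∈ e)).card := by
    simp only [hN, Finset.card_filter]
    exact Finset.sum_comm
  -- Step 3: bound per edge
  set P₂ := P.filter (fun e => e ⊆ S₂) with hP2
  have hbound : ∑ a ∈ S₂, N a ≤ P.card + P₂.card := by
    rw [hdc]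
    have h1 : ∑ e ∈ P, (S₂.filter (fun a => a ∈ e)).card
        ≤ ∑ e ∈ P, (if e ⊆ S₂ then 2 else 1) := by
      apply Finset.sum_le_sum
      intro e he
      by_cases hsub : e ⊆ S₂
      · simp only [hsub, if_true]
        calc (S₂.filter (fun a => a ∈ e)).card ≤ e.card :=
              Finset.card_le_card (fun a ha => (Finset.mem_filter.mp ha).2)
          _ = 2 := hP e he
      · simp only [hsub, if_false]
        have hss : S₂.filter (fun a => a ∈ e) ⊂ e := by
          refine Finset.ssubset_iff_of_subset (fun a ha => (Finset.mem_filter.mp ha).2)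
            |>.mpr ?_
          obtain ⟨a, hae, haS⟩ := Finset.not_subset.mp hsub
          exact ⟨a, hae, fun h => haS (Finset.mem_filter.mp h).1⟩
        have := Finset.card_lt_card hss
        rw [hP e he] at this
        omega
    have h2 : ∑ e ∈ P, (if e ⊆ S₂ then 2 else 1) = P.card + P₂.card := by
      rw [Finset.sum_ite, Finset.sum_const, Finset.sum_const]
      have := Finset.card_filter_add_card_filter_not (s := P)
        (p := fun e => e ⊆ S₂)
      have hcc : P₂.card = (P.filter (fun e => e ⊆ S₂)).card := by rw [hP2]
      simp only [smul_eq_mul]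
      omega
    omega
  have hP2card : P₂.card ≤ s.choose 2 := by
    have : P₂ ⊆ S₂.powersetCard 2 := by
      intro e he
      rw [Finset.mem_powersetCard]
      obtain ⟨heP, hsub⟩ := Finset.mem_filter.mp he
      exact ⟨hsub, hP e heP⟩
    calc P₂.card ≤ (S₂.powersetCard 2).card := Finset.card_le_card this
      _ = s.choose 2 := by rw [Finset.card_powersetCard]
  -- Combine: T ≤ s^2
  have hchoose : 2 * s.choose 2 ≤ s * s := by
    have := Nat.choose_two_right s
    have h := Nat.div_mul_le_self (s * (s - 1)) 2
    nlinarith [Nat.sub_le s 1, Nat.choose_two_right s, Nat.div_mul_le_self (s * (s-1)) 2]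
  have hTs : T ≤ s * s := by
    omega
  -- sqrt part
  have hsqrt : Real.sqrt T ≤ (s : ℝ) := by
    have : (T : ℝ) ≤ (s : ℝ) * (s : ℝ) := by exact_mod_cast hTs
    have h := Real.sqrt_le_sqrt this
    rwa [Real.sqrt_mul_self (by positivity)] at h
  -- T/B part
  have hTB : (T : ℝ) / B ≤ (s : ℝ) := by
    rw [div_le_iff₀ hB]
    have hsumB : ∑ a ∈ S₂, (N a : ℝ) ≤ ∑ a ∈ S₂, B :=
      Finset.sum_le_sum (fun a _ => hNB a)
    rw [Finset.sum_const, nsmul_eq_mul] at hsumB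
    nlinarith
  exact max_le hsqrt hTB
end

section
/- Let (X_x)_{x∈N} be {0,1}-valued random variables on a finite index set N of size n, whose joint distribution is exchangeable (invariant under permutations of N), and let K = ∑_x X_x. Then for any u ∈ [0,1] there exists a coupling with i.i.d. Bernoulli(u) random variables (Y_x)_{x∈N} such that M := ∑_x Y_x is independent of (X_x)_x and, on the event {M ≥ K}, one has X_x ≤ Y_x for all x ∈ N. -/
open MeasureTheory ProbabilityTheory ENNReal

/-- The Bernoulli(u) distribution on ℕ (mass u at 1, mass 1-u at 0). -/
noncomputable def bernNat (u : ℝ≥0∞) : Measure ℕ :=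
  u • Measure.dirac 1 + (1 - u) • Measure.dirac 0

section Aux
variable {ι : Type} [Fintype ι] [DecidableEq ι]

lemma aux_card_supersets (s : Finset ι) (m : ℕ) (hk : s.card ≤ m) :
    ((Finset.powersetCard m (Finset.univ : Finset ι)).filter (fun t => s ⊆ t)).card
      = (Fintype.card ι - s.card).choose (m - s.card) := by
  have h1 : ((Finset.powersetCard m (Finset.univ : Finset ι)).filter (fun t => s ⊆ t)).card
      = (Finset.powersetCard (m - s.card) ((Finset.univ : Finset ι) \ s)).card := by
    apply Finset.card_bij' (fun t _ => t \ s) (fun w _ => w ∪ s)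
    · intro t ht
      simp only [Finset.mem_filter, Finset.mem_powersetCard] at ht
      obtain ⟨⟨-, hcard⟩, hst⟩ := ht
      rw [Finset.mem_powersetCard]
      exact ⟨Finset.sdiff_subset_sdiff (Finset.subset_univ t) (Finset.Subset.refl s),
        by rw [Finset.card_sdiff_of_subset hst, hcard]⟩
    · intro w hw
      simp only [Finset.mem_powersetCard] at hw
      obtain ⟨hw1, hw2⟩ := hw
      have hdisj : Disjoint w s := by
        rw [Finset.disjoint_left]
        intro a haw has
        exact (Finset.mem_sdiff.1 (hw1 haw)).2 has
      simp only [Finset.mem_filter, Finset.mem_powersetCard]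
      refine ⟨⟨Finset.subset_univ _, ?_⟩, Finset.subset_union_right⟩
      rw [Finset.card_union_of_disjoint hdisj, hw2]
      omega
    · intro t ht
      simp only [Finset.mem_filter] at ht
      exact Finset.sdiff_union_of_subset ht.2
    · intro w hw
      simp only [Finset.mem_powersetCard] at hw
      have hdisj : Disjoint w s := by
        rw [Finset.disjoint_left]
        intro a haw has
        exact (Finset.mem_sdiff.1 (hw.1 haw)).2 has
      rw [Finset.union_sdiff_distrib, Finset.sdiff_self, Finset.union_empty,
        Finset.sdiff_eq_self_iff_disjoint.2 hdisj]
  rw [h1, Finset.card_powersetCard, Finset.card_sdiff_of_subset (Finset.subset_univ s), Finset.card_univ]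

lemma aux_perm (s t : Finset ι) (h : s.card = t.card) :
    ∃ σ : Equiv.Perm ι, ∀ x, σ x ∈ t ↔ x ∈ s := by
  have hc : sᶜ.card = tᶜ.card := by
    rw [Finset.card_compl, Finset.card_compl, h]
  let e : {x // x ∈ s} ≃ {x // x ∈ t} := Finset.equivOfCardEq h
  let f : {x // ¬ x ∈ s} ≃ {x // ¬ x ∈ t} :=
    (Equiv.subtypeEquivRight (fun x => (Finset.mem_compl (s := s)).symm)).trans
      ((Finset.equivOfCardEq hc).trans
        (Equiv.subtypeEquivRight (fun x => (Finset.mem_compl (s := t)))))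
  refine ⟨Equiv.subtypeCongr e f, fun x => ?_⟩
  by_cases hx : x ∈ s
  · have hax : Equiv.subtypeCongr e f x = (e ⟨x, hx⟩ : ι) := by
      simp [Equiv.subtypeCongr, hx]
    rw [hax]
    simp only [hx, iff_true]
    exact (e ⟨x, hx⟩).2
  · have hax : Equiv.subtypeCongr e f x = (f ⟨x, hx⟩ : ι) := by
      simp [Equiv.subtypeCongr, hx]
    rw [hax]
    simp only [hx, iff_false]
    exact (f ⟨x, hx⟩).2

lemma aux_sum_c (n : ℕ) (hn : n = Fintype.card ι) (s : Finset ι) (m : ℕ) :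
    ∑ t ∈ Finset.powersetCard m (Finset.univ : Finset ι),
      (if s.card ≤ m then
        (if s ⊆ t then ((n.choose m : ℕ) : ℝ≥0∞)
          / (((n - s.card).choose (m - s.card) : ℕ) : ℝ≥0∞) else 0)
      else 1)
      = ((n.choose m : ℕ) : ℝ≥0∞) := by
  subst hn
  by_cases hkm : s.card ≤ m
  · simp only [if_pos hkm]
    rcases le_or_gt m (Fintype.card ι) with hmn | hnm
    · rw [← Finset.sum_filter, Finset.sum_const, aux_card_supersets s m hkm, nsmul_eq_mul]
      have hpos : ((((Fintype.card ι) - s.card).choose (m - s.card) : ℕ) : ℝ≥0∞) ≠ 0 := by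
        exact_mod_cast (Nat.choose_pos (Nat.sub_le_sub_right hmn _)).ne'
      rw [div_eq_mul_inv, mul_comm (((Fintype.card ι).choose m : ℕ) : ℝ≥0∞) _, ← mul_assoc,
        ENNReal.mul_inv_cancel hpos (natCast_ne_top _), one_mul]
    · rw [Finset.powersetCard_eq_empty.2 (by rwa [Finset.card_univ]),
        Finset.sum_empty, Nat.choose_eq_zero_of_lt hnm, Nat.cast_zero]
  · simp only [if_neg hkm]
    rw [Finset.sum_const, Finset.card_powersetCard, Finset.card_univ, nsmul_eq_mul, mul_one]

lemma aux_sum_dirac_apply {α : Type} [Fintype α] [MeasurableSpace α]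
    [MeasurableSingletonClass α] (w : α → ℝ≥0∞) (A : Set α) :
    (∑ a : α, w a • Measure.dirac a) A = ∑ a : α, A.indicator (fun a => w a) a := by
  rw [show ((∑ a : α, w a • Measure.dirac a) A) = ∑ a : α, (w a • Measure.dirac a) A from by
    rw [Measure.coe_finset_sum]; exact Finset.sum_apply _ _ _]
  refine Finset.sum_congr rfl fun a _ => ?_
  rw [Measure.smul_apply, Measure.dirac_apply, smul_eq_mul]
  by_cases ha : a ∈ A
  · rw [Set.indicator_of_mem ha, Set.indicator_of_mem ha, Pi.one_apply, mul_one]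
  · rw [Set.indicator_of_notMem ha, Set.indicator_of_notMem ha, mul_zero]

lemma aux_binom (n : ℕ) (u : ℝ≥0∞) (hu : u ≤ 1) :
    ∑ m ∈ Finset.range (n + 1), (n.choose m : ℝ≥0∞) * (u ^ m * (1 - u) ^ (n - m)) = 1 := by
  have h := add_pow u (1 - u) n
  rw [add_tsub_cancel_of_le hu, one_pow] at h
  calc ∑ m ∈ Finset.range (n + 1), (n.choose m : ℝ≥0∞) * (u ^ m * (1 - u) ^ (n - m))
      = ∑ m ∈ Finset.range (n + 1), u ^ m * (1 - u) ^ (n - m) * (n.choose m : ℝ≥0∞) :=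
        Finset.sum_congr rfl (fun m _ => mul_comm _ _)
    _ = 1 := h.symm

end Aux

theorem coupling_exchangeable_bernoulli {ι : Type} [Fintype ι]
    {Ω : Type} [MeasurableSpace Ω] (μ : Measure Ω) [IsProbabilityMeasure μ]
    (X : ι → Ω → ℕ) (hX01 : ∀ x ω, X x ω ≤ 1)
    (hXmeas : ∀ x, Measurable (X x))
    (hexch : ∀ σ : Equiv.Perm ι,
      Measure.map (fun ω => fun x => X (σ x) ω) μ =
        Measure.map (fun ω => fun x => X x ω) μ)
    (u : ℝ≥0∞) (hu : u ≤ 1) :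
    ∃ (Ω' : Type) (_ : MeasurableSpace Ω') (ν : Measure Ω')
      (X' Y : ι → Ω' → ℕ),
      IsProbabilityMeasure ν ∧
      (∀ x, Measurable (X' x)) ∧ (∀ x, Measurable (Y x)) ∧
      Measure.map (fun ω => fun x => X' x ω) ν =
        Measure.map (fun ω => fun x => X x ω) μ ∧
      Measure.map (fun ω => fun x => Y x ω) ν =
        Measure.pi (fun _ : ι => bernNat u) ∧
      IndepFun (fun ω => ∑ x, Y x ω) (fun ω => fun x => X' x ω) ν ∧
      (∀ᵐ ω ∂ν, (∑ x, X' x ω ≤ ∑ x, Y x ω) → ∀ x, X' x ω ≤ Y x ω) := by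
  classical
  set n := Fintype.card ι with hn
  -- Bernoulli facts
  have hbern_sing : ∀ j : ℕ, bernNat u {j} = if j = 1 then u else if j = 0 then 1 - u else 0 := by
    intro j
    simp only [bernNat, Measure.add_apply, Measure.smul_apply, Measure.dirac_apply,
      smul_eq_mul, Set.indicator_apply, Set.mem_singleton_iff, Pi.one_apply]
    rcases j with _ | _ | j <;> simp
  haveI hbprob : IsProbabilityMeasure (bernNat u) := by
    constructor
    simp only [bernNat, Measure.add_apply, Measure.smul_apply, smul_eq_mul, measure_univ,
      mul_one]
    exact add_tsub_cancel_of_le hu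
  -- the law of the X-vector
  set T : Ω → ι → ℕ := fun ω x => X x ω with hTdef
  have hT : Measurable T := measurable_pi_lambda _ hXmeas
  set P : Measure (ι → ℕ) := Measure.map T μ with hPdef
  haveI hPprob : IsProbabilityMeasure P := Measure.isProbabilityMeasure_map hT.aemeasurable
  -- indicator functions
  set ind : Finset ι → ι → ℕ := fun s x => if x ∈ s then 1 else 0 with hinddef
  have hind_inj : Function.Injective ind := by
    intro s t hst
    ext x
    have h := congrFun hst x
    simp only [hinddef] at h
    split_ifs at h with h1 h2 <;> simp_all
  have hsum_ind : ∀ s : Finset ι, ∑ x, ind s x = s.card := by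
    intro s
    simp [hinddef, Finset.sum_boole, Finset.filter_mem_eq_inter]
  have hind_range : ∀ f : ι → ℕ, (∀ x, f x ≤ 1) →
      f = ind (Finset.univ.filter (fun x => f x = 1)) := by
    intro f hf
    funext x
    simp only [hinddef, Finset.mem_filter, Finset.mem_univ, true_and]
    by_cases h : f x = 1
    · simp [h]
    · have : f x = 0 := by have := hf x; omega
      simp [h, this]
  have hle_ind : ∀ s t : Finset ι, s ⊆ t → ∀ x, ind s x ≤ ind t x := by
    intro s t hst x
    simp only [hinddef]
    by_cases hx : x ∈ s
    · simp [hx, hst hx]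
    · simp [hx]
  -- masses of the law of the X-vector
  set p : Finset ι → ℝ≥0∞ := fun s => P {ind s} with hpdef
  have hP_apply : ∀ f : ι → ℕ, P {f} = μ (T ⁻¹' {f}) := fun f =>
    Measure.map_apply hT (measurableSet_singleton f)
  have hp_card : ∀ s t : Finset ι, s.card = t.card → p s = p t := by
    intro s t h
    obtain ⟨σ, hσ⟩ := aux_perm s t h
    have hSmeas : Measurable (fun f : ι → ℕ => fun x => f (σ x)) :=
      measurable_pi_lambda _ (fun x => measurable_pi_apply (σ x))
    have hmap : Measure.map (fun f : ι → ℕ => fun x => f (σ x)) P = P := by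
      rw [hPdef, Measure.map_map hSmeas hT]
      exact hexch σ
    have hSt : (fun x => ind t (σ x)) = ind s := by
      funext x
      simp only [hinddef]
      rw [if_congr (hσ x) rfl rfl]
    have hinj : Function.Injective (fun f : ι → ℕ => fun x => f (σ x)) := by
      intro a b hab
      funext y
      have := congrFun hab (σ.symm y)
      simpa using this
    have hpre : (fun f : ι → ℕ => fun x => f (σ x)) ⁻¹' {ind s} = {ind t} := by
      ext g
      simp only [Set.mem_preimage, Set.mem_singleton_iff]
      constructor
      · intro hg
        exact hinj (hg.trans hSt.symm)
      · rintro rfl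
        exact hSt
    calc p s = P {ind s} := rfl
      _ = (Measure.map (fun f : ι → ℕ => fun x => f (σ x)) P) {ind s} := by rw [hmap]
      _ = P ((fun f : ι → ℕ => fun x => f (σ x)) ⁻¹' {ind s}) :=
          Measure.map_apply hSmeas (measurableSet_singleton _)
      _ = P {ind t} := by rw [hpre]
      _ = p t := rfl
  have hsum_p : ∑ s : Finset ι, p s = 1 := by
    have hdisj : (↑(Finset.univ : Finset (Finset ι)) : Set (Finset ι)).PairwiseDisjoint
        (fun s => ({ind s} : Set (ι → ℕ))) := by
      intro a _ b _ hab
      simp only [Function.onFun, Set.disjoint_singleton_left, Set.mem_singleton_iff]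
      exact fun h => hab (hind_inj h)
    have hcup : T ⁻¹' (⋃ s ∈ (Finset.univ : Finset (Finset ι)), ({ind s} : Set (ι → ℕ)))
        = Set.univ := by
      ext ω
      simp only [Set.mem_preimage, Set.mem_iUnion, Set.mem_singleton_iff, Finset.mem_univ,
        exists_true_left, Set.mem_univ, iff_true]
      exact ⟨_, hind_range (T ω) (fun x => hX01 x ω)⟩
    calc ∑ s : Finset ι, p s
        = P (⋃ s ∈ (Finset.univ : Finset (Finset ι)), ({ind s} : Set (ι → ℕ))) :=
          (measure_biUnion_finset hdisj (fun s _ => measurableSet_singleton _)).symm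
      _ = μ (T ⁻¹' (⋃ s ∈ (Finset.univ : Finset (Finset ι)), ({ind s} : Set (ι → ℕ)))) :=
          Measure.map_apply hT (Finset.measurableSet_biUnion _ (fun s _ => measurableSet_singleton _))
      _ = μ Set.univ := by rw [hcup]
      _ = 1 := measure_univ
  have hP_notrange : ∀ f : ι → ℕ, (∀ s, ind s ≠ f) → P {f} = 0 := by
    intro f hf
    rw [hP_apply]
    convert measure_empty (μ := μ)
    ext ω
    simp only [Set.mem_preimage, Set.mem_singleton_iff, Set.mem_empty_iff_false, iff_false]
    intro hTf
    exact hf _ (((hind_range (T ω) (fun x => hX01 x ω)).symm.trans hTf).symm).symm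
  -- the coupling measure
  letI mΩ' : MeasurableSpace (Finset ι × Finset ι) := ⊤
  haveI : MeasurableSingletonClass (Finset ι × Finset ι) :=
    ⟨fun _ => MeasurableSpace.measurableSet_top⟩
  set b : ℕ → ℝ≥0∞ := fun m => u ^ m * (1 - u) ^ (n - m) with hbdef
  set c : Finset ι → Finset ι → ℝ≥0∞ := fun s t =>
    if s.card ≤ t.card then
      (if s ⊆ t then ((n.choose t.card : ℝ≥0∞))
        / (((n - s.card).choose (t.card - s.card) : ℕ) : ℝ≥0∞) else 0)
    else 1 with hcdef
  set w : Finset ι → Finset ι → ℝ≥0∞ := fun s t => p s * b t.card * c s t with hwdef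
  set ν : Measure (Finset ι × Finset ι) :=
    ∑ st : Finset ι × Finset ι, w st.1 st.2 • Measure.dirac st with hνdef
  have hν : ∀ A : Set (Finset ι × Finset ι),
      ν A = ∑ st : Finset ι × Finset ι, A.indicator (fun st => w st.1 st.2) st := by
    intro A
    rw [hνdef]
    exact aux_sum_dirac_apply _ A
  -- slice sums over t of fixed cardinality
  have hslice : ∀ (s : Finset ι) (m : ℕ),
      ∑ t ∈ Finset.powersetCard m Finset.univ, w s t
        = p s * ((n.choose m : ℝ≥0∞) * b m) := by
    intro s m
    have h1 : ∀ t ∈ Finset.powersetCard m (Finset.univ : Finset ι),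
        w s t = (p s * b m) *
          (if s.card ≤ m then
            (if s ⊆ t then ((n.choose m : ℕ) : ℝ≥0∞)
              / (((n - s.card).choose (m - s.card) : ℕ) : ℝ≥0∞) else 0)
          else 1) := by
      intro t ht
      have htc : t.card = m := (Finset.mem_powersetCard.1 ht).2
      simp only [hwdef, hcdef, htc]
    rw [Finset.sum_congr rfl h1, ← Finset.mul_sum, aux_sum_c n hn s m]
    ring
  -- row sums
  have hrow : ∀ s : Finset ι, ∑ t : Finset ι, w s t = p s := by
    intro s
    have h0 : ∑ t : Finset ι, w s t = ∑ t ∈ (Finset.univ : Finset ι).powerset, w s t := by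
      rw [Finset.powerset_univ]
    rw [h0, Finset.sum_powerset, Finset.card_univ, ← hn]
    calc ∑ m ∈ Finset.range (n + 1), ∑ t ∈ Finset.powersetCard m Finset.univ, w s t
        = ∑ m ∈ Finset.range (n + 1), p s * ((n.choose m : ℝ≥0∞) * b m) :=
          Finset.sum_congr rfl (fun m _ => hslice s m)
      _ = p s * ∑ m ∈ Finset.range (n + 1), (n.choose m : ℝ≥0∞) * b m := by
          rw [Finset.mul_sum]
      _ = p s := by
          simp only [hbdef]
          rw [aux_binom n u hu, mul_one]
  -- column sums
  have hrtot : ∑ k ∈ Finset.range (n + 1), ∑ s' ∈ Finset.powersetCard k Finset.univ, p s' = 1 := by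
    have h := Finset.sum_powerset (Finset.univ : Finset ι) p
    rw [Finset.card_univ, ← hn] at h
    rw [← h, Finset.powerset_univ]
    exact hsum_p
  have hr : ∀ (k : ℕ) (s : Finset ι), s.card = k →
      (n.choose k : ℝ≥0∞) * p s = ∑ s' ∈ Finset.powersetCard k Finset.univ, p s' := by
    intro k s hs
    have e1 : ∑ s' ∈ Finset.powersetCard k Finset.univ, p s'
        = ∑ _s' ∈ Finset.powersetCard k (Finset.univ : Finset ι), p s :=
      Finset.sum_congr rfl (fun s' hs' =>
        hp_card s' s ((Finset.mem_powersetCard.1 hs').2.trans hs.symm))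
    rw [e1, Finset.sum_const, Finset.card_powersetCard, Finset.card_univ, ← hn, nsmul_eq_mul]
  have hcol : ∀ t : Finset ι, ∑ s : Finset ι, w s t = b t.card := by
    intro t
    have hmn : t.card ≤ n := by rw [hn]; exact Finset.card_le_univ t
    have h0 : ∑ s : Finset ι, w s t = ∑ s ∈ (Finset.univ : Finset ι).powerset, w s t := by
      rw [Finset.powerset_univ]
    have hinner : ∀ k, k ≤ n →
        ∑ s ∈ Finset.powersetCard k Finset.univ, w s t
          = b t.card * ∑ s' ∈ Finset.powersetCard k Finset.univ, p s' := by
      intro k hkn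
      by_cases hkm : k ≤ t.card
      · set D : ℝ≥0∞ := ((n.choose t.card : ℕ) : ℝ≥0∞)
          / (((n - k).choose (t.card - k) : ℕ) : ℝ≥0∞) with hDdef
        have hw1 : ∀ s ∈ Finset.powersetCard k (Finset.univ : Finset ι),
            w s t = if s ⊆ t then p s * (b t.card * D) else 0 := by
          intro s hs
          have hsc : s.card = k := (Finset.mem_powersetCard.1 hs).2
          simp only [hwdef, hcdef, hsc, if_pos hkm]
          rw [← hDdef, mul_ite, mul_zero, mul_assoc]
        rw [Finset.sum_congr rfl hw1, ← Finset.sum_filter]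
        have hfilter : (Finset.powersetCard k (Finset.univ : Finset ι)).filter (fun s => s ⊆ t)
            = Finset.powersetCard k t := by
          ext s
          simp only [Finset.mem_filter, Finset.mem_powersetCard]
          exact ⟨fun h => ⟨h.2, h.1.2⟩, fun h => ⟨⟨Finset.subset_univ s, h.2⟩, h.1⟩⟩
        rw [hfilter]
        have hc1 : ((n.choose k : ℕ) : ℝ≥0∞) ≠ 0 := by
          exact_mod_cast (Nat.choose_pos hkn).ne'
        have hc2 : (((n - k).choose (t.card - k) : ℕ) : ℝ≥0∞) ≠ 0 := by
          exact_mod_cast (Nat.choose_pos (Nat.sub_le_sub_right hmn k)).ne'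
        have hkey : ((t.card.choose k : ℕ) : ℝ≥0∞) * D = ((n.choose k : ℕ) : ℝ≥0∞) := by
          rw [hDdef, div_eq_mul_inv, ← mul_assoc, ← Nat.cast_mul,
            mul_comm (t.card.choose k) (n.choose t.card),
            Nat.choose_mul hkm, Nat.cast_mul, mul_assoc,
            ENNReal.mul_inv_cancel hc2 (natCast_ne_top _), mul_one]
        refine (ENNReal.mul_right_inj hc1 (natCast_ne_top _)).1 ?_
        rw [Finset.mul_sum]
        calc ∑ s ∈ Finset.powersetCard k t,
              ((n.choose k : ℕ) : ℝ≥0∞) * (p s * (b t.card * D))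
            = ∑ _s ∈ Finset.powersetCard k t,
                (∑ s' ∈ Finset.powersetCard k Finset.univ, p s') * (b t.card * D) := by
              refine Finset.sum_congr rfl (fun s hs => ?_)
              rw [← mul_assoc, hr k s (Finset.mem_powersetCard.1 hs).2]
          _ = (Finset.powersetCard k t).card •
                ((∑ s' ∈ Finset.powersetCard k Finset.univ, p s') * (b t.card * D)) :=
              Finset.sum_const _
          _ = ((t.card.choose k : ℕ) : ℝ≥0∞) *
                ((∑ s' ∈ Finset.powersetCard k Finset.univ, p s') * (b t.card * D)) := by
              rw [Finset.card_powersetCard, nsmul_eq_mul]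
          _ = (((t.card.choose k : ℕ) : ℝ≥0∞) * D) *
                (b t.card * (∑ s' ∈ Finset.powersetCard k Finset.univ, p s')) := by ring
          _ = ((n.choose k : ℕ) : ℝ≥0∞) *
                (b t.card * (∑ s' ∈ Finset.powersetCard k Finset.univ, p s')) := by rw [hkey]
      · have hw1 : ∀ s ∈ Finset.powersetCard k (Finset.univ : Finset ι),
            w s t = b t.card * p s := by
          intro s hs
          have hsc : s.card = k := (Finset.mem_powersetCard.1 hs).2
          simp only [hwdef, hcdef, hsc, if_neg hkm]
          rw [mul_one, mul_comm]
        rw [Finset.sum_congr rfl hw1, ← Finset.mul_sum]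
    rw [h0, Finset.sum_powerset, Finset.card_univ, ← hn]
    calc ∑ k ∈ Finset.range (n + 1), ∑ s ∈ Finset.powersetCard k Finset.univ, w s t
        = ∑ k ∈ Finset.range (n + 1),
            b t.card * ∑ s' ∈ Finset.powersetCard k Finset.univ, p s' :=
          Finset.sum_congr rfl (fun k hk => hinner k (Nat.lt_succ_iff.1 (Finset.mem_range.1 hk)))
      _ = b t.card * ∑ k ∈ Finset.range (n + 1),
            ∑ s' ∈ Finset.powersetCard k Finset.univ, p s' := by rw [Finset.mul_sum]
      _ = b t.card := by rw [hrtot, mul_one]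
  -- random variables
  set X' : ι → Finset ι × Finset ι → ℕ := fun x st => ind st.1 x with hX'def
  set Y : ι → Finset ι × Finset ι → ℕ := fun x st => ind st.2 x with hYdef
  have hX'vec : (fun st : Finset ι × Finset ι => fun x => X' x st) = fun st => ind st.1 := rfl
  have hYsum : ∀ st : Finset ι × Finset ι, (∑ x, Y x st) = st.2.card := fun st => hsum_ind st.2
  have hX'sum : ∀ st : Finset ι × Finset ι, (∑ x, X' x st) = st.1.card := fun st => hsum_ind st.1
  refine ⟨Finset ι × Finset ι, mΩ', ν, X', Y, ?_, fun x => measurable_from_top,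
    fun x => measurable_from_top, ?_, ?_, ?_, ?_⟩
  · -- probability measure
    constructor
    rw [hν Set.univ]
    simp only [Set.indicator_univ]
    calc ∑ st : Finset ι × Finset ι, w st.1 st.2
        = ∑ s : Finset ι, ∑ t : Finset ι, w s t := Fintype.sum_prod_type _
      _ = ∑ s : Finset ι, p s := Finset.sum_congr rfl (fun s _ => hrow s)
      _ = 1 := hsum_p
  · -- law of X'
    refine Measure.ext_of_singleton (fun f => ?_)
    rw [Measure.map_apply measurable_from_top (measurableSet_singleton f)]
    have hpre : (fun ω' : Finset ι × Finset ι => fun x => X' x ω') ⁻¹' {f}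
        = {st : Finset ι × Finset ι | ind st.1 = f} := rfl
    rw [hpre, hν]
    have hsum : ∑ st : Finset ι × Finset ι,
        ({st : Finset ι × Finset ι | ind st.1 = f}).indicator (fun st => w st.1 st.2) st
        = ∑ s : Finset ι, (if ind s = f then p s else 0) := by
      rw [Fintype.sum_prod_type]
      refine Finset.sum_congr rfl (fun s _ => ?_)
      by_cases hs : ind s = f
      · rw [if_pos hs]
        calc ∑ t : Finset ι,
              ({st : Finset ι × Finset ι | ind st.1 = f}).indicator
                (fun st => w st.1 st.2) (s, t)
            = ∑ t : Finset ι, w s t :=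
              Finset.sum_congr rfl (fun t _ => Set.indicator_of_mem
                (show (s, t) ∈ {st : Finset ι × Finset ι | ind st.1 = f} from hs) _)
          _ = p s := hrow s
      · rw [if_neg hs]
        exact Finset.sum_eq_zero (fun t _ => Set.indicator_of_notMem
          (show (s, t) ∉ {st : Finset ι × Finset ι | ind st.1 = f} from hs) _)
    rw [hsum]
    by_cases hf : ∃ s₀, ind s₀ = f
    · obtain ⟨s₀, rfl⟩ := hf
      have hcong : ∀ s : Finset ι,
          (if ind s = ind s₀ then p s else 0) = if s = s₀ then p s else 0 :=
        fun s => if_congr ⟨fun h => hind_inj h, fun h => by rw [h]⟩ rfl rfl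
      rw [Finset.sum_congr rfl (fun s _ => hcong s),
        Finset.sum_ite_eq' Finset.univ s₀ p, if_pos (Finset.mem_univ s₀)]
    · have h0 : ∀ s : Finset ι, (if ind s = f then p s else 0) = 0 :=
        fun s => if_neg (fun h => hf ⟨s, h⟩)
      rw [Finset.sum_congr rfl (fun s _ => h0 s), Finset.sum_const_zero]
      exact (hP_notrange f (fun s h => hf ⟨s, h⟩)).symm
  · -- law of Y
    refine Measure.ext_of_singleton (fun f => ?_)
    rw [Measure.map_apply measurable_from_top (measurableSet_singleton f)]
    have hpre : (fun ω' : Finset ι × Finset ι => fun x => Y x ω') ⁻¹' {f}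
        = {st : Finset ι × Finset ι | ind st.2 = f} := rfl
    rw [hpre, hν]
    have hsum : ∑ st : Finset ι × Finset ι,
        ({st : Finset ι × Finset ι | ind st.2 = f}).indicator (fun st => w st.1 st.2) st
        = ∑ t : Finset ι, (if ind t = f then b t.card else 0) := by
      rw [Fintype.sum_prod_type, Finset.sum_comm]
      refine Finset.sum_congr rfl (fun t _ => ?_)
      by_cases ht : ind t = f
      · rw [if_pos ht]
        calc ∑ s : Finset ι,
              ({st : Finset ι × Finset ι | ind st.2 = f}).indicator
                (fun st => w st.1 st.2) (s, t)
            = ∑ s : Finset ι, w s t :=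
              Finset.sum_congr rfl (fun s _ => Set.indicator_of_mem
                (show (s, t) ∈ {st : Finset ι × Finset ι | ind st.2 = f} from ht) _)
          _ = b t.card := hcol t
      · rw [if_neg ht]
        exact Finset.sum_eq_zero (fun s _ => Set.indicator_of_notMem
          (show (s, t) ∉ {st : Finset ι × Finset ι | ind st.2 = f} from ht) _)
    rw [hsum]
    have hpi : Measure.pi (fun _ : ι => bernNat u) {f} = ∏ x, bernNat u {f x} := by
      rw [show ({f} : Set (ι → ℕ)) = Set.univ.pi (fun x => {f x}) from by
        ext g
        simp [Set.mem_univ_pi, funext_iff]]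
      exact Measure.pi_pi _ _
    rw [hpi]
    by_cases hf : ∃ t₀, ind t₀ = f
    · obtain ⟨t₀, rfl⟩ := hf
      have hcong : ∀ t : Finset ι,
          (if ind t = ind t₀ then b t.card else 0) = if t = t₀ then b t.card else 0 :=
        fun t => if_congr ⟨fun h => hind_inj h, fun h => by rw [h]⟩ rfl rfl
      rw [Finset.sum_congr rfl (fun t _ => hcong t),
        Finset.sum_ite_eq' Finset.univ t₀ (fun t => b t.card), if_pos (Finset.mem_univ t₀)]
      have hprod : ∀ x : ι, bernNat u {ind t₀ x} = if x ∈ t₀ then u else 1 - u := by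
        intro x
        simp only [hinddef]
        by_cases hx : x ∈ t₀ <;> simp [hx, hbern_sing]
      rw [show (∏ x, bernNat u {ind t₀ x}) = ∏ x : ι, (if x ∈ t₀ then u else 1 - u) from
        Finset.prod_congr rfl (fun x _ => hprod x)]
      rw [← Finset.prod_filter_mul_prod_filter_not Finset.univ (· ∈ t₀)]
      have e1 : ∏ x ∈ Finset.univ.filter (· ∈ t₀), (if x ∈ t₀ then u else 1 - u)
          = u ^ t₀.card := by
        rw [Finset.prod_congr rfl (fun x hx => if_pos (Finset.mem_filter.1 hx).2),
          Finset.prod_const]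
        congr 1
        rw [Finset.filter_mem_eq_inter, Finset.univ_inter]
      have e2 : ∏ x ∈ Finset.univ.filter (fun x => ¬ x ∈ t₀), (if x ∈ t₀ then u else 1 - u)
          = (1 - u) ^ (n - t₀.card) := by
        rw [Finset.prod_congr rfl (fun x hx => if_neg (Finset.mem_filter.1 hx).2),
          Finset.prod_const]
        congr 1
        have hcomp : Finset.univ.filter (fun x => ¬ x ∈ t₀) = t₀ᶜ := by
          ext x
          simp [Finset.mem_compl]
        rw [hcomp, Finset.card_compl, hn]
      rw [e1, e2]
    · have h0 : ∀ t : Finset ι, (if ind t = f then b t.card else 0) = 0 :=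
        fun t => if_neg (fun h => hf ⟨t, h⟩)
      rw [Finset.sum_congr rfl (fun t _ => h0 t), Finset.sum_const_zero]
      have hx : ∃ x, 2 ≤ f x := by
        by_contra hcon
        push_neg at hcon
        exact hf ⟨_, (hind_range f (fun x => Nat.lt_succ_iff.1 (hcon x))).symm⟩
      obtain ⟨x₀, hx₀⟩ := hx
      symm
      refine Finset.prod_eq_zero (Finset.mem_univ x₀) ?_
      rw [hbern_sing]
      have h1 : f x₀ ≠ 1 := by omega
      have h2 : f x₀ ≠ 0 := by omega
      rw [if_neg h1, if_neg h2]
  · -- independence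
    rw [ProbabilityTheory.indepFun_iff_measure_inter_preimage_eq_mul]
    intro A B _ _
    have key : ∀ (A : Set ℕ) (B : Set (ι → ℕ)),
        ν ((fun ω' : Finset ι × Finset ι => ∑ x, Y x ω') ⁻¹' A
            ∩ (fun ω' : Finset ι × Finset ι => fun x => X' x ω') ⁻¹' B)
          = (∑ m ∈ Finset.range (n + 1), if m ∈ A then (n.choose m : ℝ≥0∞) * b m else 0)
            * (∑ s : Finset ι, if ind s ∈ B then p s else 0) := by
      intro A B
      rw [hν, Fintype.sum_prod_type]
      have hterm : ∀ s t : Finset ι,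
          ((fun ω' : Finset ι × Finset ι => ∑ x, Y x ω') ⁻¹' A
              ∩ (fun ω' : Finset ι × Finset ι => fun x => X' x ω') ⁻¹' B).indicator
            (fun st => w st.1 st.2) (s, t)
          = if ind s ∈ B then (if t.card ∈ A then w s t else 0) else 0 := by
        intro s t
        have hmem : (s, t) ∈ ((fun ω' : Finset ι × Finset ι => ∑ x, Y x ω') ⁻¹' A
              ∩ (fun ω' : Finset ι × Finset ι => fun x => X' x ω') ⁻¹' B)
            ↔ (t.card ∈ A ∧ ind s ∈ B) := by
          rw [Set.mem_inter_iff, Set.mem_preimage, Set.mem_preimage, hYsum (s, t)]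
        by_cases hm : (s, t) ∈ ((fun ω' : Finset ι × Finset ι => ∑ x, Y x ω') ⁻¹' A
            ∩ (fun ω' : Finset ι × Finset ι => fun x => X' x ω') ⁻¹' B)
        · obtain ⟨h2, h1⟩ := hmem.1 hm
          rw [Set.indicator_of_mem hm, if_pos h1, if_pos h2]
        · rw [Set.indicator_of_notMem hm]
          by_cases h1 : ind s ∈ B
          · rw [if_pos h1]
            by_cases h2 : t.card ∈ A
            · exact absurd (hmem.2 ⟨h2, h1⟩) hm
            · rw [if_neg h2]
          · rw [if_neg h1]
      rw [Finset.sum_congr rfl (fun s _ => Finset.sum_congr rfl (fun t _ => hterm s t))]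
      have hsliceA : ∀ s : Finset ι,
          ∑ t : Finset ι, (if t.card ∈ A then w s t else 0)
            = p s * ∑ m ∈ Finset.range (n + 1),
                (if m ∈ A then (n.choose m : ℝ≥0∞) * b m else 0) := by
        intro s
        have h0 : ∑ t : Finset ι, (if t.card ∈ A then w s t else 0)
            = ∑ t ∈ (Finset.univ : Finset ι).powerset, (if t.card ∈ A then w s t else 0) := by
          rw [Finset.powerset_univ]
        rw [h0, Finset.sum_powerset, Finset.card_univ, ← hn]
        have hin : ∀ m, ∑ t ∈ Finset.powersetCard m Finset.univ,
            (if t.card ∈ A then w s t else 0)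
            = if m ∈ A then p s * ((n.choose m : ℝ≥0∞) * b m) else 0 := by
          intro m
          have hcongr : ∀ t ∈ Finset.powersetCard m (Finset.univ : Finset ι),
              (if t.card ∈ A then w s t else 0) = if m ∈ A then w s t else 0 := by
            intro t ht
            rw [(Finset.mem_powersetCard.1 ht).2]
          rw [Finset.sum_congr rfl hcongr]
          by_cases hmA : m ∈ A
          · simp only [if_pos hmA]
            exact hslice s m
          · simp only [if_neg hmA, Finset.sum_const_zero]
        rw [Finset.sum_congr rfl (fun m _ => hin m), Finset.mul_sum]
        refine Finset.sum_congr rfl (fun m _ => ?_)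
        by_cases hmA : m ∈ A <;> simp [hmA]
      have hout : ∀ s : Finset ι,
          (∑ t : Finset ι, if ind s ∈ B then (if t.card ∈ A then w s t else 0) else 0)
          = (if ind s ∈ B then p s else 0) * (∑ m ∈ Finset.range (n + 1),
              if m ∈ A then (n.choose m : ℝ≥0∞) * b m else 0) := by
        intro s
        by_cases hB : ind s ∈ B
        · simp only [if_pos hB]
          exact hsliceA s
        · simp only [if_neg hB, Finset.sum_const_zero, zero_mul]
      rw [Finset.sum_congr rfl (fun s _ => hout s), ← Finset.sum_mul]
      exact mul_comm _ _
    have hA := key A Set.univ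
    have hB := key Set.univ B
    rw [Set.preimage_univ, Set.inter_univ] at hA
    rw [Set.preimage_univ, Set.univ_inter] at hB
    simp only [Set.mem_univ, if_true] at hA hB
    rw [hsum_p, mul_one] at hA
    simp only [hbdef] at hB
    rw [aux_binom n u hu, one_mul] at hB
    rw [key A B, hA, hB]
  · -- domination
    rw [ae_iff]
    rw [hν]
    refine Finset.sum_eq_zero (fun st _ => ?_)
    by_cases hst : st ∈ {ω' : Finset ι × Finset ι |
        ¬((∑ x, X' x ω') ≤ ∑ x, Y x ω' → ∀ x, X' x ω' ≤ Y x ω')}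
    · rw [Set.indicator_of_mem hst]
      simp only [Set.mem_setOf_eq] at hst
      push_neg at hst
      obtain ⟨h1, x₀, h2⟩ := hst
      have hcard : st.1.card ≤ st.2.card := by
        rw [← hX'sum st, ← hYsum st]
        exact h1
      have hnsub : ¬ st.1 ⊆ st.2 := by
        intro hsub
        exact absurd (hle_ind st.1 st.2 hsub x₀) (not_le.2 h2)
      simp only [hwdef, hcdef, if_pos hcard, if_neg hnsub, mul_zero]
    · rw [Set.indicator_of_notMem hst]
end
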